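/- If a family P of n paths has connection type π ∈ Sₙ and P* is obtained from P by swapping the tails of two paths pᵢ and pⱼ (i ≠ j) after a common vertex, then the connection type of P* is σ∘π where σ is the transposition (π(i) π(j)); in particular sgn(connection type of P*) = −sgn(π). -/

import Mathlib

open Finset Equiv

/-- `l` is (the list of vertices of) a directed path from `u` to `v` in the
directed graph with adjacency relation `Adj`. -/
def IsDirPath {V : Type*} (Adj : V → V → Prop) (u v : V) (l : List V) : Prop :=
  l.Chain' Adj ∧ l.head? = some u ∧ l.getLast? = some v

lemma isDirPath_swap {V : Type*} (Adj : V → V → Prop) {u v u' v' : V} {x : V}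
    {a b a' b' : List V} (h : IsDirPath Adj u v (a ++ x :: b))
    (h' : IsDirPath Adj u' v' (a' ++ x :: b')) :
    IsDirPath Adj u v' (a ++ x :: b') := by
  obtain ⟨hc, hh, -⟩ := h
  obtain ⟨hc', -, hl'⟩ := h'
  simp only [List.Chain', List.isChain_append] at hc hc'
  refine ⟨List.isChain_append.mpr ⟨hc.1, hc'.2.1, ?_⟩, ?_, ?_⟩
  · simpa using hc.2.2
  · cases a <;> simpa using hh
  · simpa using hl'

theorem tail_swap_connection_type {V : Type*} [DecidableEq V]
    (Adj : V → V → Prop) (n : ℕ) (u v : Fin n → V) (π : Equiv.Perm (Fin n))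
    (P : Fin n → List V)
    (hP : ∀ k, IsDirPath Adj (u k) (v (π k)) (P k))
    (i j : Fin n) (hij : i ≠ j) (x : V) (a₁ b₁ a₂ b₂ : List V)
    (hdi : P i = a₁ ++ x :: b₁) (hdj : P j = a₂ ++ x :: b₂) :
    (∀ k, IsDirPath Adj (u k)
        (v ((Equiv.swap (π i) (π j) * π) k))
        ((Function.update (Function.update P i (a₁ ++ x :: b₂)) j (a₂ ++ x :: b₁)) k)) ∧
      Equiv.Perm.sign (Equiv.swap (π i) (π j) * π) = -Equiv.Perm.sign π := by
  have hππ : π i ≠ π j := fun h => hij (π.injective h)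
  constructor
  · intro k
    rcases eq_or_ne k j with rfl | hkj
    · simp only [Function.update_self, Equiv.Perm.mul_apply, Equiv.swap_apply_right]
      exact isDirPath_swap Adj (hdj ▸ hP k) (hdi ▸ hP i)
    · rw [Function.update_of_ne hkj]
      rcases eq_or_ne k i with rfl | hki
      · simp only [Function.update_self, Equiv.Perm.mul_apply, Equiv.swap_apply_left]
        exact isDirPath_swap Adj (hdi ▸ hP k) (hdj ▸ hP j)
      · rw [Function.update_of_ne hki]
        have : (Equiv.swap (π i) (π j)) (π k) = π k :=
          Equiv.swap_apply_of_ne_of_ne (fun h => hki (π.injective h))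
            (fun h => hkj (π.injective h))
        simpa [Equiv.Perm.mul_apply, this] using hP k
  · rw [map_mul, Equiv.Perm.sign_swap hππ]
    exact neg_one_mul _
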